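/- (Positivity of the splitting scheme.) Suppose for all cells i: h^n_i E^n_i + g^n_{K,i} ≥ 0, E^n_i ≥ 0, E^{n+1}_i ≥ 0, h^n_i ∈ (0,1], h^{n+1}_i ∈ [0,1], ν, ε, Δt, Δx > 0. Define g^{n+1/2}_{K,i} = g^n_{K,i} h^{n+1}_i/h^n_i and then g^{n+1}_{K,i} by the semi-implicit upwind scheme for a fixed velocity v. If Δt |v| / Δx · h^{n+1}_i (g^{n+1/2}_{K,i} + E^n_i) ≤ g^{n+1/2}_{K,i} + h^{n+1}_i E^n_i for all i, then h^{n+1}_i E^{n+1}_i + g^{n+1}_{K,i} ≥ 0 for all i, and consequently E^{n+1}_i + g^{n+1}_{K,i} ≥ 0 for all i. -/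

import Mathlib

/-- positivity of the splitting scheme under the CFL condition. -/
theorem splitting_scheme_positivity
    (v ν ε Δt Δx : ℝ) (hν : 0 < ν) (hε : 0 < ε) (hΔt : 0 < Δt) (hΔx : 0 < Δx)
    (g0 gHalf g1 E0 E1 h0 h1 : ℤ → ℝ)
    (hE0 : ∀ i, 0 ≤ E0 i) (hE1 : ∀ i, 0 ≤ E1 i)
    (hh0 : ∀ i, 0 < h0 i ∧ h0 i ≤ 1) (hh1 : ∀ i, 0 ≤ h1 i ∧ h1 i ≤ 1)
    -- induction hypothesis at time n
    (hpos : ∀ i, 0 ≤ h0 i * E0 i + g0 i)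
    -- step 1: transition-function re-projection
    (hhalf : ∀ i, gHalf i = g0 i * h1 i / h0 i)
    -- step 2: semi-implicit upwind transport-relaxation scheme
    (hscheme : ∀ i : ℤ,
      (g1 i - gHalf i) / Δt
        + h1 i * ((min v 0 * gHalf (i + 1) + max v 0 * gHalf i)
            - (min v 0 * gHalf i + max v 0 * gHalf (i - 1))) / Δx
      = -(ν / ε) * g1 i
        - h1 i * ((E1 i - E0 i) / Δt
            + ((min v 0 * E0 (i + 1) + max v 0 * E0 i)
              - (min v 0 * E0 i + max v 0 * E0 (i - 1))) / Δx))
    -- CFL condition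
    (hCFL : ∀ i, Δt * |v| / Δx * (h1 i * (gHalf i + E0 i)) ≤ gHalf i + h1 i * E0 i) :
    (∀ i, 0 ≤ h1 i * E1 i + g1 i) ∧ (∀ i, 0 ≤ E1 i + g1 i) := by
  -- basic positivity facts
  have hgh : ∀ j, 0 ≤ gHalf j + h1 j * E0 j := by
    intro j
    have h0j := (hh0 j).1
    have h1j := (hh1 j).1
    have : gHalf j + h1 j * E0 j = (g0 j + h0 j * E0 j) * h1 j / h0 j := by
      rw [hhalf j]; field_simp
    rw [this]
    apply div_nonneg _ h0j.le
    apply mul_nonneg _ h1j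
    linarith [hpos j]
  have hu : ∀ j, 0 ≤ gHalf j + E0 j := by
    intro j
    have := hgh j
    have h1j := (hh1 j).2
    nlinarith [hE0 j]
  have habs : |v| = max v 0 - min v 0 := by
    rcases le_total v 0 with h | h
    · rw [abs_of_nonpos h, max_eq_right h, min_eq_left h]; ring
    · rw [abs_of_nonneg h, max_eq_left h, min_eq_right h]; ring
  have key1 : ∀ i, 0 ≤ h1 i * E1 i + g1 i := by
    intro i
    have h1i0 := (hh1 i).1
    -- the key rearranged (division-free) identity
    have key : Δx * ((ε + Δt * ν) * g1 i + ε * (h1 i * E1 i))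
        = ε * Δx * (gHalf i + h1 i * E0 i)
          - ε * Δt * ((max v 0 - min v 0) * (h1 i * (gHalf i + E0 i)))
          - ε * Δt * (h1 i * (min v 0 * (gHalf (i + 1) + E0 (i + 1))))
          + ε * Δt * (h1 i * (max v 0 * (gHalf (i - 1) + E0 (i - 1)))) := by
      have h := hscheme i
      field_simp at h
      have key2 : (Δt * Δx) * (Δx * ((ε + Δt * ν) * g1 i + ε * (h1 i * E1 i)))
          = (Δt * Δx) * (ε * Δx * (gHalf i + h1 i * E0 i)
            - ε * Δt * ((max v 0 - min v 0) * (h1 i * (gHalf i + E0 i)))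
            - ε * Δt * (h1 i * (min v 0 * (gHalf (i + 1) + E0 (i + 1))))
            + ε * Δt * (h1 i * (max v 0 * (gHalf (i - 1) + E0 (i - 1))))) := by
        linear_combination (Δt * Δx) * h
      exact mul_left_cancel₀ (by positivity) key2
    -- each piece of the right-hand side is nonnegative
    have hc := mul_le_mul_of_nonneg_left (hCFL i) (mul_pos hε hΔx).le
    have heq : ε * Δx * (Δt * |v| / Δx * (h1 i * (gHalf i + E0 i)))
        = ε * Δt * ((max v 0 - min v 0) * (h1 i * (gHalf i + E0 i))) := by
      rw [← habs]; field_simp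
    rw [heq] at hc
    have t2 : ε * Δt * (h1 i * (min v 0 * (gHalf (i + 1) + E0 (i + 1)))) ≤ 0 := by
      apply mul_nonpos_of_nonneg_of_nonpos (by positivity)
      exact mul_nonpos_of_nonneg_of_nonpos h1i0
        (mul_nonpos_of_nonpos_of_nonneg (min_le_right v 0) (hu (i + 1)))
    have t3 : 0 ≤ ε * Δt * (h1 i * (max v 0 * (gHalf (i - 1) + E0 (i - 1)))) := by
      apply mul_nonneg (by positivity)
      exact mul_nonneg h1i0 (mul_nonneg (le_max_right v 0) (hu (i - 1)))
    have hS' : 0 ≤ Δx * ((ε + Δt * ν) * g1 i + ε * (h1 i * E1 i)) := by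
      rw [key]; linarith
    have hS : 0 ≤ (ε + Δt * ν) * g1 i + ε * (h1 i * E1 i) :=
      nonneg_of_mul_nonneg_right (by linarith) hΔx
    have hhE : 0 ≤ h1 i * E1 i := mul_nonneg h1i0 (hE1 i)
    have hA : ε < ε + Δt * ν := by nlinarith
    rcases le_or_gt 0 (g1 i) with hg | hg
    · linarith
    · nlinarith
  refine ⟨key1, fun i => ?_⟩
  have := key1 i
  have h1i := (hh1 i).2
  nlinarith [hE1 i]
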